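/- Counting colorings by their monochromatic edge sets: Let G = (V, E, ε) be a finite multigraph, q a positive integer, and A ⊆ E. Then q^{k_G(A)} = ∑_{B with A ⊆ B ⊆ E} χ(G/B; q), where χ(G/B; q) is the number of maps ω : V → Fin q that are constant on each connected component of (V, B) and satisfy ω(x) ≠ ω(y) for every edge e ∈ E∖B with ε(e) = ⟦(x, y)⟧. (Here q^{k_G(A)} counts the q-colorings of V that are constant on each connected component of (V, A).) -/

import Mathlib

open Finset

/-- The number of connected components of the spanning subgraph `(V, A)` of the
multigraph given by `ε : E → Sym2 V`. -/
noncomputable def multigraphComponents {V E : Type*} (ε : E → Sym2 V) (A : Finset E) : ℕ :=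
  Nat.card (SimpleGraph.fromEdgeSet (ε '' (A : Set E))).ConnectedComponent

/-- The number of proper `q`-colorings of the contraction `G/B` of the multigraph given
by `ε : E → Sym2 V`: maps `ω : V → Fin q` constant on each connected component of the
spanning subgraph `(V, B)` with `ω x ≠ ω y` for every edge `e ∈ E ∖ B` with endpoints
`x, y`. -/
noncomputable def contractionColoringCount {V E : Type*} (ε : E → Sym2 V) (B : Finset E)
    (q : ℕ) : ℕ :=
  Nat.card {ω : V → Fin q //
    (∀ x y : V, (SimpleGraph.fromEdgeSet (ε '' (B : Set E))).Reachable x y → ω x = ω y) ∧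
    ∀ e ∉ B, ∀ x y : V, ε e = s(x, y) → ω x ≠ ω y}

theorem reach_iff {V E : Type*} (ε : E → Sym2 V) (B : Finset E) {q : ℕ} (ω : V → Fin q) :
    (∀ x y : V, (SimpleGraph.fromEdgeSet (ε '' (B : Set E))).Reachable x y → ω x = ω y) ↔
    ∀ e ∈ B, ∀ x y : V, ε e = s(x, y) → ω x = ω y := by
  constructor
  · intro h e he x y hxy
    by_cases hne : x = y
    · rw [hne]
    · exact h x y (SimpleGraph.Adj.reachable
        ((SimpleGraph.fromEdgeSet_adj _).mpr ⟨⟨e, he, hxy⟩, hne⟩))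
  · intro h x y hr
    obtain ⟨w⟩ := hr
    induction w with
    | nil => rfl
    | cons a _ ih =>
      rename_i u v z _
      obtain ⟨⟨e, he, hev⟩, -⟩ := (SimpleGraph.fromEdgeSet_adj _).mp a
      exact (h e he u v hev).trans ih

theorem neg_iff {V E : Type*} (ε : E → Sym2 V) (e : E) {q : ℕ} (ω : V → Fin q) :
    (∀ x y : V, ε e = s(x, y) → ω x ≠ ω y) ↔
    ¬ (∀ x y : V, ε e = s(x, y) → ω x = ω y) := by
  constructor
  · intro h hall
    obtain ⟨x, y, hxy⟩ : ∃ x y, ε e = s(x, y) := by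
      induction (ε e) using Sym2.ind with
      | _ x y => exact ⟨x, y, rfl⟩
    exact h x y hxy (hall x y hxy)
  · intro h x y hxy heq
    apply h
    intro a b hab
    rcases Sym2.eq_iff.mp (hxy.symm.trans hab) with ⟨rfl, rfl⟩ | ⟨rfl, rfl⟩
    · exact heq
    · exact heq.symm

/-- Counting colorings by their monochromatic edge sets:
`q^{k_G(A)} = ∑_{A ⊆ B ⊆ E} χ(G/B;q)`. -/
theorem colorings_by_monochromatic_edges {V E : Type*} [Fintype V] [Fintype E]
    [DecidableEq E] (ε : E → Sym2 V) (q : ℕ) (hq : 0 < q) (A : Finset E) :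
    q ^ multigraphComponents ε A =
      ∑ B ∈ Finset.univ.powerset.filter (fun B => A ⊆ B),
        contractionColoringCount ε B q := by
  classical
  set m : (V → Fin q) → Finset E :=
    fun ω => univ.filter (fun e => ∀ x y : V, ε e = s(x, y) → ω x = ω y) with hm
  have hmem : ∀ (ω : V → Fin q) (e : E),
      e ∈ m ω ↔ ∀ x y : V, ε e = s(x, y) → ω x = ω y := by
    intro ω e; simp [hm]
  -- each summand counts the fiber of m
  have hcount : ∀ B : Finset E,
      contractionColoringCount ε B q = (univ.filter fun ω : V → Fin q => m ω = B).card := by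
    intro B
    rw [contractionColoringCount, Nat.card_eq_fintype_card, Fintype.card_subtype]
    congr 1
    ext ω
    simp only [mem_filter, mem_univ, true_and]
    constructor
    · rintro ⟨h1, h2⟩
      ext e
      rw [hmem]
      constructor
      · intro he
        by_contra heB
        exact (neg_iff ε e ω).mp (h2 e heB) he
      · intro heB
        exact (reach_iff ε B ω).mp h1 e heB
    · rintro rfl
      refine ⟨(reach_iff ε (m ω) ω).mpr ?_, ?_⟩
      · intro e he; exact (hmem ω e).mp he
      · intro e he
        exact (neg_iff ε e ω).mpr (fun hc => he ((hmem ω e).mpr hc))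
  -- LHS counts colorings constant on components of A
  have hLHS : q ^ multigraphComponents ε A =
      (univ.filter fun ω : V → Fin q => A ⊆ m ω).card := by
    set G := SimpleGraph.fromEdgeSet (ε '' (A : Set E)) with hG
    have e1 : (G.ConnectedComponent → Fin q) ≃
        {ω : V → Fin q // ∀ x y : V, G.Reachable x y → ω x = ω y} :=
      { toFun := fun f => ⟨f ∘ G.connectedComponentMk,
          fun x y h => congrArg f (SimpleGraph.ConnectedComponent.sound h)⟩
        invFun := fun ω => SimpleGraph.ConnectedComponent.lift ω.1
          (fun v w p _ => ω.2 v w ⟨p⟩)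
        left_inv := by
          intro f
          funext c
          induction c using SimpleGraph.ConnectedComponent.ind with
          | _ v => simp
        right_inv := by
          intro ω
          ext v
          simp }
    have : q ^ multigraphComponents ε A = Nat.card (G.ConnectedComponent → Fin q) := by
      rw [Nat.card_fun, Nat.card_eq_fintype_card (α := Fin q), Fintype.card_fin,
        multigraphComponents]
    rw [this, Nat.card_congr e1, Nat.card_eq_fintype_card, Fintype.card_subtype]
    congr 1
    ext ω
    simp only [mem_filter, mem_univ, true_and]
    rw [reach_iff]
    constructor
    · intro h e he
      exact (hmem ω e).mpr (h e he)
    · intro h e he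
      exact (hmem ω e).mp (h he)
  rw [hLHS]
  rw [Finset.card_eq_sum_card_fiberwise (f := m)
    (t := Finset.univ.powerset.filter (fun B => A ⊆ B))
    (fun ω hω => by
      simp only [mem_coe, mem_filter, mem_powerset] at *
      exact ⟨subset_univ _, hω.2⟩)]
  refine Finset.sum_congr rfl ?_
  intro B hB
  simp only [mem_filter, mem_powerset] at hB
  rw [hcount B]
  congr 1
  ext ω
  simp only [mem_filter, mem_univ, true_and, and_iff_right_iff_imp]
  rintro rfl
  exact hB.2
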